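/- Let μ be a probability measure on a countable group G, let ν be a μ-stationary probability measure on a G-space X, let D be a countable G-set, and let Θ: X → D be a measurable G-equivariant map. If E ⊆ X is a G-invariant measurable subset with ν(E) > 0, then Θ(E) contains a finite orbit of the subgroup of G generated by the support of μ. -/

import Mathlib

open MeasureTheory Pointwise

/-- Ballmann's maximum-principle lemma: if `μ` is a probability measure on a countable
group `G` (given by its weights), `ν` a `μ`-stationary probability measure on a `G`-space
`X`, `D` a countable `G`-set and `Θ : X → D` a measurable `G`-equivariant map, then for
every `G`-invariant measurable set `E ⊆ X` with `ν(E) > 0`, the image `Θ(E)` contains a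
finite orbit of the subgroup generated by the support of `μ`. -/
theorem stationary_measure_finite_orbit
    {G X D : Type*} [Group G] [Countable G]
    [MeasurableSpace X] [MulAction G X]
    (hmeas : ∀ g : G, Measurable fun x : X => g • x)
    [MulAction G D] [Countable D]
    (μ : G → ENNReal) (hμ : ∑' g : G, μ g = 1)
    (ν : Measure X) [IsProbabilityMeasure ν]
    (hstat : ∀ A : Set X, MeasurableSet A →
      ν A = ∑' g : G, μ g * ν ((fun x => g • x) ⁻¹' A))
    (Θ : X → D) (hΘ : ∀ d : D, MeasurableSet (Θ ⁻¹' {d}))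
    (hequiv : ∀ (g : G) (x : X), Θ (g • x) = g • Θ x)
    (E : Set X) (hE : MeasurableSet E)
    (hinv : ∀ (g : G) (x : X), x ∈ E → g • x ∈ E)
    (hpos : 0 < ν E) :
    ∃ d : D, d ∈ Θ '' E ∧
      (MulAction.orbit (Subgroup.closure {g : G | μ g ≠ 0}) d).Finite ∧
      MulAction.orbit (Subgroup.closure {g : G | μ g ≠ 0}) d ⊆ Θ '' E := by
  classical
  set f : D → ENNReal := fun d => ν (E ∩ Θ ⁻¹' {d}) with hf
  have hmeasd : ∀ d : D, MeasurableSet (E ∩ Θ ⁻¹' {d}) := fun d => hE.inter (hΘ d)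
  -- the f d sum to ν E
  have hsum : ∑' d : D, f d = ν E := by
    rw [← measure_iUnion ?_ hmeasd]
    · congr 1
      ext x
      simp
    · intro d d' hdd'
      simp only [Function.onFun, Set.disjoint_left]
      rintro x ⟨-, hx⟩ ⟨-, hx'⟩
      exact hdd' (hx.symm.trans hx')
  have htop : ∑' d : D, f d ≠ ⊤ := by rw [hsum]; exact measure_ne_top ν E
  have hftop : ∀ d, f d ≠ ⊤ := fun d => measure_ne_top ν _
  -- E is fully invariant
  have hEinv : ∀ g : G, (fun x : X => g • x) ⁻¹' E = E := by
    intro g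
    ext x
    constructor
    · intro hx
      have := hinv g⁻¹ _ hx
      simpa using this
    · exact hinv g x
  -- stationarity identity for f
  have key : ∀ d : D, f d = ∑' g : G, μ g * f (g⁻¹ • d) := by
    intro d
    have := hstat (E ∩ Θ ⁻¹' {d}) (hmeasd d)
    rw [hf]
    simp only
    rw [this]
    congr 1
    ext g
    congr 2
    rw [Set.preimage_inter, hEinv g]
    congr 1
    ext x
    simp only [Set.mem_preimage, Set.mem_singleton_iff, hequiv]
    exact ⟨fun h => by rw [eq_inv_smul_iff]; exact h, fun h => by rw [← eq_inv_smul_iff]; exact h⟩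
  -- existence of a maximizer
  have hsum_pos : 0 < ∑' d : D, f d := by rw [hsum]; exact hpos
  obtain ⟨d₀, hd₀⟩ : ∃ d : D, f d ≠ 0 := by
    by_contra h
    push_neg at h
    rw [tsum_congr h] at hsum_pos
    simp at hsum_pos
  have hTfin : {d : D | f d₀ ≤ f d}.Finite :=
    ENNReal.finite_const_le_of_tsum_ne_top htop hd₀
  have hTne : {d : D | f d₀ ≤ f d}.Nonempty := ⟨d₀, show f d₀ ≤ f d₀ from le_rfl⟩
  obtain ⟨d₁, hd₁T, hd₁max⟩ := Set.exists_max_image _ f hTfin hTne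
  have hmax : ∀ d : D, f d ≤ f d₁ := by
    intro d
    by_cases hd : f d₀ ≤ f d
    · exact hd₁max d hd
    · exact (not_le.mp hd).le.trans hd₁T
  set m : ENNReal := f d₁ with hm
  have hm0 : m ≠ 0 := fun h => hd₀ (le_antisymm (h ▸ hd₁T) zero_le)
  have hmtop : m ≠ ⊤ := hftop d₁
  -- the set of maximizers
  set S : Set D := {d : D | f d = m} with hSdef
  have hSfin : S.Finite := (ENNReal.finite_const_le_of_tsum_ne_top htop hm0).subset
    (fun d hd => le_of_eq hd.symm)
  have hd₁S : d₁ ∈ S := rfl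
  -- maximizers are invariant under inverses of the support
  have hstep : ∀ d ∈ S, ∀ g : G, μ g ≠ 0 → g⁻¹ • d ∈ S := by
    intro d hd g hg
    by_contra hcon
    have hlt : f (g⁻¹ • d) < m := lt_of_le_of_ne (hmax _) hcon
    have h1 : ∑' g' : G, μ g' * f (g'⁻¹ • d) < ∑' g' : G, μ g' * m := by
      refine ENNReal.tsum_lt_tsum ?_ (fun g' => by gcongr; exact hmax _) ?_ (i := g)
      · rw [← key d]; exact hftop d
      · exact ENNReal.mul_lt_mul_right hg (fun h => by
          have : μ g ≤ ∑' g' : G, μ g' := ENNReal.le_tsum g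
          rw [hμ, h] at this
          exact (by norm_num : ¬ (⊤ : ENNReal) ≤ 1) this) hlt
    rw [← key d, hd] at h1
    rw [ENNReal.tsum_mul_right, hμ, one_mul] at h1
    exact lt_irrefl m h1
  -- S is stable under the subgroup generated by the support
  have hstab : Subgroup.closure {g : G | μ g ≠ 0} ≤ MulAction.stabilizer G S := by
    rw [Subgroup.closure_le]
    intro s hs
    have hsub : s⁻¹ • S ⊆ S := by
      rintro _ ⟨d, hd, rfl⟩
      exact hstep d hd s hs
    have heq : s⁻¹ • S = S :=
      Set.eq_of_subset_of_ncard_le hsub (by rw [Set.ncard_smul_set]) hSfin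
    have : s⁻¹ ∈ MulAction.stabilizer G S := heq
    simpa using inv_mem this
  -- orbit of d₁ stays in S
  have horb : MulAction.orbit (Subgroup.closure {g : G | μ g ≠ 0}) d₁ ⊆ S := by
    rintro _ ⟨⟨g, hg⟩, rfl⟩
    have hgstab : g • S = S := hstab hg
    have : g • d₁ ∈ g • S := Set.smul_mem_smul_set hd₁S
    rwa [hgstab] at this
  -- S is contained in the image of E
  have hSsub : S ⊆ Θ '' E := by
    intro d hd
    have : f d ≠ 0 := by rw [hd]; exact hm0
    obtain ⟨x, hxE, hxd⟩ := nonempty_of_measure_ne_zero this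
    exact ⟨x, hxE, hxd⟩
  exact ⟨d₁, hSsub hd₁S, hSfin.subset horb, horb.trans hSsub⟩
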